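/- (Convergence of the unfolded domains, Prop. 4.4.) Assume the sequence ε_n → 0⁺ together with its partitions is compatible with the oscillations. Then for every 1 ≤ p < ∞, the functions T_{ε_n}(χ^{ε_n}) converge to χ strongly in L^p((0,1) × Y*), i.e. ∫_{(0,1)×Y*} |T_{ε_n}(χ^{ε_n}) − χ|^p → 0 as n → ∞. -/

import Mathlib

open MeasureTheory Set Filter Topology

noncomputable section

/-- The thin domain `R^ε = {(x,y) : x ∈ (0,1), 0 < y < ε G(x, x/ε)}`. -/
def thinDomain (G : ℝ → ℝ → ℝ) (ε : ℝ) : Set (ℝ × ℝ) :=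
  {z : ℝ × ℝ | z.1 ∈ Ioo (0 : ℝ) 1 ∧ z.2 ∈ Ioo (0 : ℝ) (ε * G z.1 (z.1 / ε))}

/-- The reference cell `Y* = (0,l₁) × (0,G₁)`. -/
def Ystar (l1 G1 : ℝ) : Set (ℝ × ℝ) := Ioo (0 : ℝ) l1 ×ˢ Ioo (0 : ℝ) G1

/-- A partition `0 = x₀ < x₁ < ⋯ < x_{N+1} = 1` of the interval `(0,1)` (for a parameter `ε`). -/
structure OscPartition where
  N : ℕ
  pts : ℕ → ℝ
  pts_zero : pts 0 = 0
  pts_last : pts (N + 1) = 1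
  pts_lt : ∀ k ≤ N, pts k < pts (k + 1)

/-- The index `k` such that `x ∈ [x_k, x_{k+1})` (for `x ∈ [0,1)`). -/
def OscPartition.idx (P : OscPartition) (x : ℝ) : ℕ :=
  Nat.findGreatest (fun k => P.pts k ≤ x) P.N

/-- `[x]_ε`, the partition point just below `x`. -/
def OscPartition.bracket (P : OscPartition) (x : ℝ) : ℝ := P.pts (P.idx x)

/-- `Γ_{[x]_ε} = (x_{k+1} - x_k) / l(x_k)` for `x ∈ [x_k, x_{k+1})`. -/
def OscPartition.Gamma (P : OscPartition) (l : ℝ → ℝ) (x : ℝ) : ℝ :=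
  (P.pts (P.idx x + 1) - P.pts (P.idx x)) / l (P.pts (P.idx x))

/-- The unfolding operator `T_ε` associated to a partition, acting on a function `φ` on `R^ε`
(extended by zero to all of `ℝ²` via the indicator of `R^ε`). -/
def unfoldOp (G : ℝ → ℝ → ℝ) (l : ℝ → ℝ) (ε : ℝ) (P : OscPartition)
    (φ : ℝ × ℝ → ℝ) : ℝ × ℝ × ℝ → ℝ := fun q =>
  if q.2.1 < l (P.bracket q.1) then
    (thinDomain G ε).indicator φ (P.bracket q.1 + P.Gamma l q.1 * q.2.1, ε * q.2.2)
  else 0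

/-- The averaging operator `U_ε`, the formal adjoint of `T_ε`. -/
def avgOp (l : ℝ → ℝ) (ε : ℝ) (P : OscPartition) (ψ : ℝ × ℝ × ℝ → ℝ) : ℝ × ℝ → ℝ := fun z =>
  (1 / l (P.bracket z.1)) *
    ∫ y₁ in Ioo (0 : ℝ) (l (P.bracket z.1)),
      ψ (P.bracket z.1 + P.Gamma l z.1 * y₁, (z.1 - P.bracket z.1) / P.Gamma l z.1, z.2 / ε)

/-- The limit set `W = {(x,y₁,y₂) : x ∈ (0,1), 0 < y₁ < l(x), 0 < y₂ < G(x,y₁)}`. -/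
def Wset (G : ℝ → ℝ → ℝ) (l : ℝ → ℝ) : Set (ℝ × ℝ × ℝ) :=
  {q | q.1 ∈ Ioo (0 : ℝ) 1 ∧ q.2.1 ∈ Ioo (0 : ℝ) (l q.1) ∧ q.2.2 ∈ Ioo (0 : ℝ) (G q.1 q.2.1)}

/-- The set `W₀ = {(x,y₁) : x ∈ (0,1), 0 < y₁ < l(x)}`. -/
def W0set (l : ℝ → ℝ) : Set (ℝ × ℝ) :=
  {z : ℝ × ℝ | z.1 ∈ Ioo (0 : ℝ) 1 ∧ z.2 ∈ Ioo (0 : ℝ) (l z.1)}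

/-! ### Auxiliary lemmas -/

lemma OscPartition.idx_monotone (P : OscPartition) : Monotone P.idx := fun _ _ hab =>
  Nat.findGreatest_mono (fun _ hn => le_trans hn hab) le_rfl

lemma OscPartition.idx_measurable (P : OscPartition) : Measurable P.idx := by
  apply measurable_to_nat
  intro y
  apply Set.OrdConnected.measurableSet
  constructor
  intro a ha b hb z hz
  have h1 := P.idx_monotone hz.1
  have h2 := P.idx_monotone hz.2
  simp only [Set.mem_preimage, Set.mem_singleton_iff] at *
  omega

lemma aux_measurableSet_eq_on {α : Type*} [TopologicalSpace α] [MeasurableSpace α]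
    [OpensMeasurableSpace α] {U : Set α} (hU : IsOpen U) {h : α → ℝ}
    (hh : ContinuousOn h U) : MeasurableSet {x | x ∈ U ∧ h x = 0} := by
  have key : {x | x ∈ U ∧ h x = 0} = U \ (U ∩ h ⁻¹' ({(0:ℝ)}ᶜ)) := by
    ext x
    by_cases hx : h x = 0 <;> simp [hx]
  rw [key]
  exact hU.measurableSet.diff
    (hh.isOpen_inter_preimage hU isClosed_singleton.isOpen_compl).measurableSet

lemma aux_prod_null_of_slices {α β : Type*} [MeasureSpace α] [MeasureSpace β]
    [SFinite (volume : Measure β)] {A : Set (α × β)} (hA : MeasurableSet A)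
    (h : ∀ x, volume (Prod.mk x ⁻¹' A) = 0) : volume A = 0 := by
  rw [show (volume : Measure (α × β)) = (volume : Measure α).prod volume from rfl,
    Measure.prod_apply hA]
  simp [h]

lemma aux_null_slab {C : Set (ℝ × ℝ)} (hC : MeasurableSet C) (h0 : volume C = 0) :
    volume {q : ℝ × ℝ × ℝ | (q.1, q.2.1) ∈ C} = 0 := by
  have hmeas : MeasurableSet {q : ℝ × ℝ × ℝ | (q.1, q.2.1) ∈ C} :=
    (measurable_fst.prodMk (measurable_fst.comp measurable_snd)) hC
  have hpre : (⇑(MeasurableEquiv.prodAssoc (α := ℝ) (β := ℝ) (γ := ℝ))) ⁻¹'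
      {q : ℝ × ℝ × ℝ | (q.1, q.2.1) ∈ C} = C ×ˢ (univ : Set ℝ) := by
    ext p
    simp [MeasurableEquiv.prodAssoc, Equiv.prodAssoc]
  have hkey := (volume_preserving_prodAssoc (α₁ := ℝ) (β₁ := ℝ) (γ₁ := ℝ)).measure_preimage
    hmeas.nullMeasurableSet
  rw [hpre] at hkey
  rw [← hkey, show (volume : Measure ((ℝ × ℝ) × ℝ)) = ((volume : Measure (ℝ × ℝ)).prod volume)
    from rfl, Measure.prod_prod, h0, zero_mul]

lemma thinDomain_isOpen {G : ℝ → ℝ → ℝ}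
    (hG : ContinuousOn (fun z : ℝ × ℝ => G z.1 z.2) (Ioo 0 1 ×ˢ (univ : Set ℝ))) (ε : ℝ) :
    IsOpen (thinDomain G ε) := by
  have hgc : ContinuousOn (fun z : ℝ × ℝ => G z.1 (z.1 / ε)) (Ioo 0 1 ×ˢ (univ : Set ℝ)) :=
    hG.comp ((continuous_fst.prodMk (continuous_fst.div_const ε)).continuousOn)
      (fun z hz => ⟨hz.1, trivial⟩)
  have key : thinDomain G ε = (Ioo (0:ℝ) 1 ×ˢ (univ : Set ℝ)) ∩
      ((fun z : ℝ × ℝ => (z.2, ε * G z.1 (z.1 / ε) - z.2)) ⁻¹' (Ioi (0:ℝ) ×ˢ Ioi (0:ℝ))) := by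
    ext z
    simp only [thinDomain, mem_inter_iff, mem_preimage, mem_prod, mem_Ioo, mem_Ioi,
      mem_setOf_eq, mem_univ, and_true]
    constructor
    · rintro ⟨h1, h2, h3⟩; exact ⟨h1, h2, by linarith⟩
    · rintro ⟨h1, h2, h3⟩; exact ⟨h1, h2, by linarith⟩
  rw [key]
  refine ContinuousOn.isOpen_inter_preimage ?_ (isOpen_Ioo.prod isOpen_univ)
    (isOpen_Ioi.prod isOpen_Ioi)
  exact (continuous_snd.continuousOn).prodMk
    ((continuousOn_const.mul hgc).sub continuous_snd.continuousOn)

lemma W0set_isOpen {l : ℝ → ℝ} (hl : ContinuousOn l (Ioo 0 1)) : IsOpen (W0set l) := by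
  have key : W0set l = (Ioo (0:ℝ) 1 ×ˢ (univ : Set ℝ)) ∩
      ((fun z : ℝ × ℝ => (z.2, l z.1 - z.2)) ⁻¹' (Ioi (0:ℝ) ×ˢ Ioi (0:ℝ))) := by
    ext z
    simp only [W0set, mem_inter_iff, mem_prod, mem_preimage, mem_Ioo, mem_Ioi,
      mem_setOf_eq, mem_univ, and_true]
    constructor
    · rintro ⟨h1, h2, h3⟩; exact ⟨h1, h2, by linarith⟩
    · rintro ⟨h1, h2, h3⟩; exact ⟨h1, h2, by linarith⟩
  rw [key]
  refine ContinuousOn.isOpen_inter_preimage ?_ (isOpen_Ioo.prod isOpen_univ)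
    (isOpen_Ioi.prod isOpen_Ioi)
  exact (continuous_snd.continuousOn).prodMk
    ((hl.comp continuous_fst.continuousOn (fun z hz => hz.1)).sub continuous_snd.continuousOn)

lemma Wset_isOpen {G : ℝ → ℝ → ℝ} {l : ℝ → ℝ} (hl : ContinuousOn l (Ioo 0 1))
    (hG : ContinuousOn (fun z : ℝ × ℝ => G z.1 z.2) (Ioo 0 1 ×ˢ (univ : Set ℝ))) :
    IsOpen (Wset G l) := by
  have key : Wset G l = (Ioo (0:ℝ) 1 ×ˢ (univ : Set (ℝ × ℝ))) ∩
      ((fun q : ℝ × ℝ × ℝ => (q.2.1, (l q.1 - q.2.1, (q.2.2, G q.1 q.2.1 - q.2.2)))) ⁻¹'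
        (Ioi (0:ℝ) ×ˢ Ioi (0:ℝ) ×ˢ Ioi (0:ℝ) ×ˢ Ioi (0:ℝ))) := by
    ext q
    simp only [Wset, mem_inter_iff, mem_prod, mem_preimage, mem_Ioo, mem_Ioi,
      mem_setOf_eq, mem_univ, and_true]
    constructor
    · rintro ⟨h1, ⟨h2a, h2b⟩, h3a, h3b⟩; exact ⟨h1, h2a, by linarith, h3a, by linarith⟩
    · rintro ⟨h1, h2, h3, h4, h5⟩; exact ⟨h1, ⟨h2, by linarith⟩, h4, by linarith⟩
  rw [key]
  refine ContinuousOn.isOpen_inter_preimage ?_ (isOpen_Ioo.prod isOpen_univ)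
    (isOpen_Ioi.prod (isOpen_Ioi.prod (isOpen_Ioi.prod isOpen_Ioi)))
  have hl' : ContinuousOn (fun q : ℝ × ℝ × ℝ => l q.1) (Ioo (0:ℝ) 1 ×ˢ (univ : Set (ℝ × ℝ))) :=
    hl.comp continuous_fst.continuousOn (fun q hq => hq.1)
  have hG' : ContinuousOn (fun q : ℝ × ℝ × ℝ => G q.1 q.2.1)
      (Ioo (0:ℝ) 1 ×ˢ (univ : Set (ℝ × ℝ))) :=
    hG.comp ((continuous_fst.prodMk (continuous_fst.comp continuous_snd)).continuousOn)
      (fun q hq => ⟨hq.1, trivial⟩)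
  exact ((continuous_fst.comp continuous_snd).continuousOn).prodMk
    ((hl'.sub (continuous_fst.comp continuous_snd).continuousOn).prodMk
      (((continuous_snd.comp continuous_snd).continuousOn).prodMk
        (hG'.sub (continuous_snd.comp continuous_snd).continuousOn)))

/-- Convergence of the unfolded domains (Prop. 4.4). -/
theorem unfolded_domains_converge
    (l0 l1 G0 G1 : ℝ) (hl0 : 0 < l0) (hl01 : l0 < l1) (hG0 : 0 < G0) (hG01 : G0 ≤ G1)
    (l : ℝ → ℝ) (hlC1 : ContDiffOn ℝ 1 l (Ioo 0 1))
    (hlb : ∀ x ∈ Icc (0 : ℝ) 1, l0 ≤ l x ∧ l x < l1)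
    (G : ℝ → ℝ → ℝ)
    (hGcont : ContinuousOn (fun z : ℝ × ℝ => G z.1 z.2) (Ioo 0 1 ×ˢ (univ : Set ℝ)))
    (hGb : ∀ x ∈ Ioo (0 : ℝ) 1, ∀ y : ℝ, G0 ≤ G x y ∧ G x y ≤ G1)
    (hGper : ∀ x ∈ Ioo (0 : ℝ) 1, ∀ y : ℝ, G x (y + l x) = G x y)
    (ε : ℕ → ℝ) (hεpos : ∀ n, 0 < ε n) (hε : Tendsto ε atTop (𝓝 0))
    (P : ℕ → OscPartition)
    (hcompat₁ : ∀ᵐ x ∂volume.restrict (Ioo (0 : ℝ) 1),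
      Tendsto (fun n => (P n).bracket x) atTop (𝓝 x) ∧
      Tendsto (fun n => l ((P n).bracket x)) atTop (𝓝 (l x)))
    (hcompat₂ : ∀ᵐ z ∂volume.restrict (W0set l),
      Tendsto (fun n => (P n).bracket z.1 + (P n).Gamma l z.1 * z.2) atTop (𝓝 z.1) ∧
      Tendsto (fun n => G ((P n).bracket z.1 + (P n).Gamma l z.1 * z.2)
          ((1 / ε n) * ((P n).bracket z.1 + (P n).Gamma l z.1 * z.2))) atTop
        (𝓝 (G z.1 z.2)))
    (pr : ℝ) (hpr : 1 ≤ pr) :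
    Tendsto
      (fun n => ∫ q in Ioo (0 : ℝ) 1 ×ˢ Ystar l1 G1,
        |unfoldOp G l (ε n) (P n)
            ((thinDomain G (ε n)).indicator (fun _ => (1 : ℝ))) q
          - (Wset G l).indicator (fun _ => (1 : ℝ)) q| ^ pr)
      atTop (𝓝 0) := by
  have hpr0 : (0:ℝ) ≤ pr := le_trans zero_le_one hpr
  have hprne : pr ≠ 0 := by positivity
  have hlcont : ContinuousOn l (Ioo 0 1) := hlC1.continuousOn
  set S : Set (ℝ × ℝ × ℝ) := Ioo (0 : ℝ) 1 ×ˢ Ystar l1 G1 with hSdef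
  have hSmeas : MeasurableSet S :=
    measurableSet_Ioo.prod (measurableSet_Ioo.prod measurableSet_Ioo)
  -- the family of functions
  set F : ℕ → ℝ × ℝ × ℝ → ℝ := fun n q =>
    |unfoldOp G l (ε n) (P n) ((thinDomain G (ε n)).indicator (fun _ => (1 : ℝ))) q
      - (Wset G l).indicator (fun _ => (1 : ℝ)) q| ^ pr with hFdef
  -- rewrite of the unfolding operator as an indicator
  have hu_eq : ∀ n, unfoldOp G l (ε n) (P n) ((thinDomain G (ε n)).indicator (fun _ => (1 : ℝ)))
      = Set.indicator ({q : ℝ × ℝ × ℝ | q.2.1 < l ((P n).bracket q.1)} ∩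
          ((fun q : ℝ × ℝ × ℝ =>
            ((P n).bracket q.1 + (P n).Gamma l q.1 * q.2.1, ε n * q.2.2)) ⁻¹'
              thinDomain G (ε n)))
        (fun _ => (1 : ℝ)) := by
    intro n
    funext q
    simp only [unfoldOp, Set.indicator_indicator, Set.inter_self]
    by_cases h1 : q.2.1 < l ((P n).bracket q.1) <;>
      by_cases h2 : ((P n).bracket q.1 + (P n).Gamma l q.1 * q.2.1, ε n * q.2.2)
        ∈ thinDomain G (ε n) <;>
        simp [h1, h2, Set.indicator_apply, Set.mem_inter_iff]
  -- measurability
  have hbmeas : ∀ n, Measurable ((P n).bracket) := fun n =>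
    (measurable_from_top (f := (P n).pts)).comp (P n).idx_measurable
  have hΓmeas : ∀ n, Measurable ((P n).Gamma l) := fun n =>
    (measurable_from_top
      (f := fun k => ((P n).pts (k + 1) - (P n).pts k) / l ((P n).pts k))).comp
      (P n).idx_measurable
  have hlbmeas : ∀ n, Measurable (fun x => l ((P n).bracket x)) := fun n =>
    (measurable_from_top (f := fun k => l ((P n).pts k))).comp (P n).idx_measurable
  have hχWmeas : Measurable ((Wset G l).indicator (fun _ => (1 : ℝ))) :=
    (measurable_const (a := (1:ℝ))).indicator (Wset_isOpen hlcont hGcont).measurableSet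
  have humeas : ∀ n, Measurable (unfoldOp G l (ε n) (P n)
      ((thinDomain G (ε n)).indicator (fun _ => (1 : ℝ)))) := by
    intro n
    rw [hu_eq n]
    have hA : MeasurableSet {q : ℝ × ℝ × ℝ | q.2.1 < l ((P n).bracket q.1)} :=
      measurableSet_lt (measurable_fst.comp measurable_snd)
        ((hlbmeas n).comp measurable_fst)
    have hψ : Measurable (fun q : ℝ × ℝ × ℝ =>
        ((P n).bracket q.1 + (P n).Gamma l q.1 * q.2.1, ε n * q.2.2)) := by
      refine Measurable.prodMk ?_ ?_
      · exact ((hbmeas n).comp measurable_fst).add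
          (((hΓmeas n).comp measurable_fst).mul (measurable_fst.comp measurable_snd))
      · exact measurable_const.mul (measurable_snd.comp measurable_snd)
    exact measurable_const.indicator
      (hA.inter (hψ ((thinDomain_isOpen hGcont (ε n)).measurableSet)))
  have hFmeas : ∀ n, AEStronglyMeasurable (F n) (volume.restrict S) := by
    intro n
    have : Measurable (F n) :=
      ((Real.continuous_rpow_const hpr0).measurable).comp ((humeas n).sub hχWmeas).abs
    exact this.aestronglyMeasurable
  -- values of the operators are in {0,1}
  have hval : ∀ n q, (unfoldOp G l (ε n) (P n)
      ((thinDomain G (ε n)).indicator (fun _ => (1 : ℝ))) q = 0 ∨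
      unfoldOp G l (ε n) (P n)
      ((thinDomain G (ε n)).indicator (fun _ => (1 : ℝ))) q = 1) := by
    intro n q
    rw [hu_eq n]
    by_cases h : q ∈ ({q : ℝ × ℝ × ℝ | q.2.1 < l ((P n).bracket q.1)} ∩
        ((fun q : ℝ × ℝ × ℝ =>
          ((P n).bracket q.1 + (P n).Gamma l q.1 * q.2.1, ε n * q.2.2)) ⁻¹'
            thinDomain G (ε n)))
    · right; simp [Set.indicator_of_mem h]
    · left; simp [Set.indicator_of_notMem h]
  have hχval : ∀ q, ((Wset G l).indicator (fun _ => (1 : ℝ)) q = 0 ∨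
      (Wset G l).indicator (fun _ => (1 : ℝ)) q = 1) := by
    intro q
    by_cases h : q ∈ Wset G l
    · right; simp [Set.indicator_of_mem h]
    · left; simp [Set.indicator_of_notMem h]
  -- uniform bound
  have hbound : ∀ n, ∀ᵐ q ∂volume.restrict S, ‖F n q‖ ≤ (1 : ℝ) := by
    intro n
    refine Filter.Eventually.of_forall (fun q => ?_)
    have h1 : |unfoldOp G l (ε n) (P n)
        ((thinDomain G (ε n)).indicator (fun _ => (1 : ℝ))) q
        - (Wset G l).indicator (fun _ => (1 : ℝ)) q| ≤ 1 := by
      rcases hval n q with h | h <;> rcases hχval q with h' | h' <;> rw [h, h'] <;> norm_num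
    have h2 : (0:ℝ) ≤ |unfoldOp G l (ε n) (P n)
        ((thinDomain G (ε n)).indicator (fun _ => (1 : ℝ))) q
        - (Wset G l).indicator (fun _ => (1 : ℝ)) q| := abs_nonneg _
    have : F n q ≤ 1 := Real.rpow_le_one h2 h1 hpr0
    have hge : (0:ℝ) ≤ F n q := Real.rpow_nonneg h2 pr
    rw [Real.norm_eq_abs, abs_of_nonneg hge]
    exact this
  have hbound_int : Integrable (fun _ : ℝ × ℝ × ℝ => (1 : ℝ)) (volume.restrict S) := by
    rw [← IntegrableOn]
    refine integrableOn_const (lt_top_iff_ne_top.1 ?_)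
    have h1 : volume S = volume (Ioo (0:ℝ) 1) * (volume (Ioo (0:ℝ) l1) * volume (Ioo (0:ℝ) G1)) := by
      rw [hSdef, Ystar, show (volume : Measure (ℝ × ℝ × ℝ))
        = (volume : Measure ℝ).prod ((volume : Measure ℝ).prod volume) from rfl,
        Measure.prod_prod, Measure.prod_prod]
    rw [h1, Real.volume_Ioo, Real.volume_Ioo, Real.volume_Ioo]
    exact ENNReal.mul_lt_top ENNReal.ofReal_lt_top
      (ENNReal.mul_lt_top ENNReal.ofReal_lt_top ENNReal.ofReal_lt_top)
  -- null exceptional sets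
  set M₁ : Set ℝ := toMeasurable (volume.restrict (Ioo (0:ℝ) 1))
    {x : ℝ | ¬ (Tendsto (fun n => (P n).bracket x) atTop (𝓝 x) ∧
      Tendsto (fun n => l ((P n).bracket x)) atTop (𝓝 (l x)))} with hM₁def
  have hM₁meas : MeasurableSet M₁ := measurableSet_toMeasurable _ _
  have hM₁null : volume (M₁ ∩ Ioo (0:ℝ) 1) = 0 := by
    rw [← Measure.restrict_apply hM₁meas, hM₁def, measure_toMeasurable]
    exact ae_iff.mp hcompat₁
  set M₂ : Set (ℝ × ℝ) := toMeasurable (volume.restrict (W0set l))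
    {z : ℝ × ℝ | ¬ (Tendsto (fun n => (P n).bracket z.1 + (P n).Gamma l z.1 * z.2) atTop (𝓝 z.1) ∧
      Tendsto (fun n => G ((P n).bracket z.1 + (P n).Gamma l z.1 * z.2)
          ((1 / ε n) * ((P n).bracket z.1 + (P n).Gamma l z.1 * z.2))) atTop
        (𝓝 (G z.1 z.2)))} with hM₂def
  have hM₂meas : MeasurableSet M₂ := measurableSet_toMeasurable _ _
  have hM₂null : volume (M₂ ∩ W0set l) = 0 := by
    rw [← Measure.restrict_apply hM₂meas, hM₂def, measure_toMeasurable]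
    exact ae_iff.mp hcompat₂
  set E₁ : Set (ℝ × ℝ × ℝ) := {q | (q.1, q.2.1) ∈ (M₁ ∩ Ioo (0:ℝ) 1) ×ˢ (univ : Set ℝ)} with hE₁def
  set E₂ : Set (ℝ × ℝ × ℝ) := {q | (q.1, q.2.1) ∈ M₂ ∩ W0set l} with hE₂def
  set E₃ : Set (ℝ × ℝ × ℝ) := {q | (q.1, q.2.1) ∈
    {z : ℝ × ℝ | z.1 ∈ Ioo (0:ℝ) 1 ∧ z.2 = l z.1}} with hE₃def
  set E₄ : Set (ℝ × ℝ × ℝ) := {q | q.1 ∈ Ioo (0:ℝ) 1 ∧ q.2.2 = G q.1 q.2.1} with hE₄def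
  have hE₁null : volume E₁ = 0 := by
    apply aux_null_slab ((hM₁meas.inter measurableSet_Ioo).prod MeasurableSet.univ)
    rw [show (volume : Measure (ℝ × ℝ)) = (volume : Measure ℝ).prod volume from rfl,
      Measure.prod_prod, hM₁null, zero_mul]
  have hE₂null : volume E₂ = 0 := by
    apply aux_null_slab (hM₂meas.inter (W0set_isOpen hlcont).measurableSet) hM₂null
  have hE₃null : volume E₃ = 0 := by
    apply aux_null_slab
    · have : {z : ℝ × ℝ | z.1 ∈ Ioo (0:ℝ) 1 ∧ z.2 = l z.1}
          = {z : ℝ × ℝ | z ∈ Ioo (0:ℝ) 1 ×ˢ (univ : Set ℝ) ∧ z.2 - l z.1 = 0} := by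
        ext z
        simp only [mem_setOf_eq, mem_prod, mem_univ, and_true, sub_eq_zero]
      rw [this]
      exact aux_measurableSet_eq_on (isOpen_Ioo.prod isOpen_univ)
        (continuous_snd.continuousOn.sub
          (hlcont.comp continuous_fst.continuousOn (fun z hz => hz.1)))
    · apply aux_prod_null_of_slices
      · have : {z : ℝ × ℝ | z.1 ∈ Ioo (0:ℝ) 1 ∧ z.2 = l z.1}
            = {z : ℝ × ℝ | z ∈ Ioo (0:ℝ) 1 ×ˢ (univ : Set ℝ) ∧ z.2 - l z.1 = 0} := by
          ext z
          simp only [mem_setOf_eq, mem_prod, mem_univ, and_true, sub_eq_zero]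
        rw [this]
        exact aux_measurableSet_eq_on (isOpen_Ioo.prod isOpen_univ)
          (continuous_snd.continuousOn.sub
            (hlcont.comp continuous_fst.continuousOn (fun z hz => hz.1)))
      · intro x
        apply measure_mono_null (t := {l x})
        · intro y hy
          exact hy.2
        · exact measure_singleton _
  have hE₄null : volume E₄ = 0 := by
    apply aux_prod_null_of_slices
    · have : E₄ = {q : ℝ × ℝ × ℝ | q ∈ Ioo (0:ℝ) 1 ×ˢ (univ : Set (ℝ × ℝ)) ∧
          q.2.2 - G q.1 q.2.1 = 0} := by
        ext q
        simp only [hE₄def, mem_setOf_eq, mem_prod, mem_univ, and_true, sub_eq_zero]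
      rw [this]
      refine aux_measurableSet_eq_on (isOpen_Ioo.prod isOpen_univ) ?_
      exact (continuous_snd.comp continuous_snd).continuousOn.sub
        (hGcont.comp ((continuous_fst.prodMk
          (continuous_fst.comp continuous_snd)).continuousOn) (fun q hq => ⟨hq.1, trivial⟩))
    · intro x
      by_cases hx : x ∈ Ioo (0:ℝ) 1
      · have hGx : Continuous (fun y : ℝ => G x y) := by
          rw [← continuousOn_univ]
          exact hGcont.comp (Continuous.continuousOn (continuous_const.prodMk continuous_id))
            (fun y _ => ⟨hx, trivial⟩)
        have hslice : Prod.mk x ⁻¹' E₄ = {p : ℝ × ℝ | p.2 = G x p.1} := by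
          ext p
          simp only [hE₄def, mem_preimage, mem_setOf_eq]
          exact and_iff_right hx
        rw [hslice]
        apply aux_prod_null_of_slices
        · exact (isClosed_eq continuous_snd (hGx.comp continuous_fst)).measurableSet
        · intro y₁
          have : Prod.mk y₁ ⁻¹' {p : ℝ × ℝ | p.2 = G x p.1} = {G x y₁} := by
            ext y₂
            simp
          rw [this]
          exact measure_singleton _
      · have : Prod.mk x ⁻¹' E₄ = ∅ := by
          ext p
          simp only [hE₄def, mem_preimage, mem_setOf_eq, mem_empty_iff_false, iff_false]
          exact fun h => hx h.1
        rw [this]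
        exact measure_empty
  -- a.e. pointwise convergence
  have hlim : ∀ᵐ q ∂volume.restrict S, Tendsto (fun n => F n q) atTop (𝓝 0) := by
    rw [ae_iff, Measure.restrict_apply' hSmeas]
    refine measure_mono_null ?_
      (measure_union_null hE₁null (measure_union_null hE₂null
        (measure_union_null hE₃null hE₄null)))
    rintro ⟨x, y₁, y₂⟩ ⟨hnt, hqS⟩
    simp only [mem_setOf_eq] at hnt
    by_contra hmem
    simp only [Set.mem_union, not_or] at hmem
    obtain ⟨hne₁, hne₂, hne₃, hne₄⟩ := hmem
    apply hnt
    -- extract the facts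
    have hx : x ∈ Ioo (0:ℝ) 1 := hqS.1
    have hy₁ : y₁ ∈ Ioo (0:ℝ) l1 := hqS.2.1
    have hy₂ : y₂ ∈ Ioo (0:ℝ) G1 := hqS.2.2
    have hp₁ : Tendsto (fun n => (P n).bracket x) atTop (𝓝 x) ∧
        Tendsto (fun n => l ((P n).bracket x)) atTop (𝓝 (l x)) := by
      by_contra hcon
      exact hne₁ ⟨⟨subset_toMeasurable _ _ hcon, hx⟩, trivial⟩
    have hyne : y₁ ≠ l x := by
      intro hcon
      exact hne₃ ⟨hx, hcon⟩
    -- it suffices to show F n q is eventually 0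
    have suffices_ev : (∀ᶠ n in atTop,
        F (n) (x, y₁, y₂) = 0) → Tendsto (fun n => F n (x, y₁, y₂)) atTop (𝓝 0) := by
      intro hev
      exact Tendsto.congr' (hev.mono fun n hn => hn.symm) tendsto_const_nhds
    apply suffices_ev
    rcases hyne.lt_or_gt with hlt | hgt
    · -- y₁ < l x : the main case
      have hW0 : (x, y₁) ∈ W0set l := ⟨hx, ⟨hy₁.1, hlt⟩⟩
      have hp₂ : Tendsto (fun n => (P n).bracket x + (P n).Gamma l x * y₁) atTop (𝓝 x) ∧
          Tendsto (fun n => G ((P n).bracket x + (P n).Gamma l x * y₁)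
            ((1 / ε n) * ((P n).bracket x + (P n).Gamma l x * y₁))) atTop (𝓝 (G x y₁)) := by
        by_contra hcon
        exact hne₂ ⟨subset_toMeasurable _ _ hcon, hW0⟩
      have hy₂ne : y₂ ≠ G x y₁ := by
        intro hcon
        exact hne₄ ⟨hx, hcon⟩
      have ev1 : ∀ᶠ n in atTop, y₁ < l ((P n).bracket x) :=
        hp₁.2.eventually_const_lt hlt
      have ev2 : ∀ᶠ n in atTop, (P n).bracket x + (P n).Gamma l x * y₁ ∈ Ioo (0:ℝ) 1 :=
        hp₂.1.eventually_mem (isOpen_Ioo.mem_nhds hx)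
      rcases hy₂ne.lt_or_gt with hy₂lt | hy₂gt
      · -- y₂ < G x y₁ : both sides are eventually 1
        have ev3 : ∀ᶠ n in atTop, y₂ < G ((P n).bracket x + (P n).Gamma l x * y₁)
            ((1 / ε n) * ((P n).bracket x + (P n).Gamma l x * y₁)) :=
          hp₂.2.eventually_const_lt hy₂lt
        filter_upwards [ev1, ev2, ev3] with n h1 h2 h3
        have hdiv : ((P n).bracket x + (P n).Gamma l x * y₁) / ε n
            = (1 / ε n) * ((P n).bracket x + (P n).Gamma l x * y₁) := by
          rw [one_div, inv_mul_eq_div]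
        have hmemTD : ((P n).bracket x + (P n).Gamma l x * y₁, ε n * y₂)
            ∈ thinDomain G (ε n) := by
          refine ⟨h2, mul_pos (hεpos n) hy₂.1, ?_⟩
          have := mul_lt_mul_of_pos_left (hdiv ▸ h3) (hεpos n)
          exact this
        have hmemW : ((x : ℝ), (y₁, y₂)) ∈ Wset G l :=
          ⟨hx, ⟨hy₁.1, hlt⟩, ⟨hy₂.1, hy₂lt⟩⟩
        simp only [hFdef, unfoldOp]
        rw [if_pos h1, Set.indicator_indicator, Set.inter_self,
          Set.indicator_of_mem hmemTD, Set.indicator_of_mem hmemW]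
        simp [Real.zero_rpow hprne]
      · -- G x y₁ < y₂ : both sides are eventually 0
        have ev3 : ∀ᶠ n in atTop, G ((P n).bracket x + (P n).Gamma l x * y₁)
            ((1 / ε n) * ((P n).bracket x + (P n).Gamma l x * y₁)) < y₂ :=
          hp₂.2.eventually_lt_const hy₂gt
        filter_upwards [ev1, ev3] with n h1 h3
        have hdiv : ((P n).bracket x + (P n).Gamma l x * y₁) / ε n
            = (1 / ε n) * ((P n).bracket x + (P n).Gamma l x * y₁) := by
          rw [one_div, inv_mul_eq_div]
        have hnotTD : ((P n).bracket x + (P n).Gamma l x * y₁, ε n * y₂)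
            ∉ thinDomain G (ε n) := by
          rintro ⟨-, -, hcon⟩
          simp only at hcon
          rw [hdiv] at hcon
          have := mul_lt_mul_of_pos_left h3 (hεpos n)
          linarith [lt_trans hcon this]
        have hnotW : ((x : ℝ), (y₁, y₂)) ∉ Wset G l := by
          rintro ⟨-, -, -, hcon⟩
          exact absurd hcon (not_lt.2 hy₂gt.le)
        simp only [hFdef, unfoldOp]
        rw [if_pos h1, Set.indicator_indicator, Set.inter_self,
          Set.indicator_of_notMem hnotTD, Set.indicator_of_notMem hnotW]
        simp [Real.zero_rpow hprne]
    · -- l x < y₁ : both sides are eventually 0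
      have ev : ∀ᶠ n in atTop, l ((P n).bracket x) < y₁ :=
        hp₁.2.eventually_lt_const hgt
      filter_upwards [ev] with n hn
      have hnotW : ((x : ℝ), (y₁, y₂)) ∉ Wset G l := by
        rintro ⟨-, hcon, -⟩
        exact absurd hcon.2 (not_lt.2 hgt.le)
      simp only [hFdef, unfoldOp]
      rw [if_neg (not_lt.2 hn.le), Set.indicator_of_notMem hnotW]
      simp [Real.zero_rpow hprne]
  -- dominated convergence
  have key := tendsto_integral_of_dominated_convergence (μ := volume.restrict S)
    (F := F) (f := fun _ => (0:ℝ)) (fun _ => (1:ℝ)) hFmeas hbound_int hbound hlim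
  rw [integral_zero] at key
  exact key

end
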